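/- There exists a matrix P ∈ GL(5, ℤ) such that Pᵀ M' P equals the block-diagonal matrix U ⊕ A1(-1) ⊕ A2(-1); that is, the lattice (ℤ⁵, M') is isometric to U ⊕ A1 ⊕ A2. In particular det M' = 6 and the cokernel ℤ⁵ / M'·ℤ⁵ is cyclic of order 6. -/

import Mathlib

open Matrix

def M' : Matrix (Fin 5) (Fin 5) ℤ :=
  !![-2, 1, 2, 0, 0;
    1, -2, 0, 1, 0;
    2, 0, -2, 0, 0;
    0, 1, 0, -2, 1;
    0, 0, 0, 1, -2]

def B : Matrix (Fin 5) (Fin 5) ℤ :=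
  !![0, 1, 0, 0, 0;
    1, 0, 0, 0, 0;
    0, 0, -2, 0, 0;
    0, 0, 0, -2, 1;
    0, 0, 0, 1, -2]

/-- The auxiliary linear functional `x ↦ 2x₀ + 5x₂ + 4x₃ + 2x₄ mod 6`. -/
def phi6 : (Fin 5 → ℤ) →ₗ[ℤ] ZMod 6 where
  toFun x := ((2 * x 0 + 5 * x 2 + 4 * x 3 + 2 * x 4 : ℤ) : ZMod 6)
  map_add' x y := by simp only [Pi.add_apply]; push_cast; ring
  map_smul' c x := by
    simp only [Pi.smul_apply, smul_eq_mul, RingHom.id_apply, zsmul_eq_mul]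
    push_cast; ring

lemma phi6_surj : Function.Surjective phi6 := by
  intro z
  refine ⟨fun i => if i = 2 then 5 * (z.val : ℤ) else 0, ?_⟩
  show ((2 * 0 + 5 * (5 * (z.val : ℤ)) + 4 * 0 + 2 * 0 : ℤ) : ZMod 6) = z
  push_cast
  rw [ZMod.natCast_val, ZMod.cast_id]
  ring_nf
  rw [show (25 : ZMod 6) = 1 by decide]
  ring

lemma range_eq_ker : LinearMap.range (Matrix.toLin' M') = LinearMap.ker phi6 := by
  ext x
  constructor
  · rintro ⟨y, rfl⟩
    have hy : Matrix.toLin' M' y = M'.mulVec y := rfl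
    rw [LinearMap.mem_ker]
    show ((2 * M'.mulVec y 0 + 5 * M'.mulVec y 2 + 4 * M'.mulVec y 3 + 2 * M'.mulVec y 4 : ℤ)
      : ZMod 6) = 0
    have : (2 * M'.mulVec y 0 + 5 * M'.mulVec y 2 + 4 * M'.mulVec y 3 + 2 * M'.mulVec y 4 : ℤ)
        = 6 * (y 0 + y 1 - y 2 - y 3) := by
      simp [M', Matrix.mulVec, dotProduct, Fin.sum_univ_five]
      ring
    rw [this, ZMod.intCast_zmod_eq_zero_iff_dvd]
    exact ⟨_, rfl⟩
  · intro hx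
    have h : ((2 * x 0 + 5 * x 2 + 4 * x 3 + 2 * x 4 : ℤ) : ZMod 6) = 0 := hx
    rw [ZMod.intCast_zmod_eq_zero_iff_dvd] at h
    obtain ⟨k, hk⟩ := h
    norm_num at hk
    refine ⟨![4*k + x 1 - 2*x 2 - 2*x 3 - x 4, x 0 + x 2, k + x 0 + x 1,
      2*k - x 2 - 2*x 3 - x 4, 4*k - x 0 - 3*x 2 - 3*x 3 - 2*x 4], ?_⟩
    show M'.mulVec _ = x
    funext i
    fin_cases i <;>
      simp [M', Matrix.mulVec, dotProduct, Fin.sum_univ_five] <;> linarith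

theorem stmt_11 :
    (∃ P : Matrix (Fin 5) (Fin 5) ℤ,
      (P.det = 1 ∨ P.det = -1) ∧ Pᵀ * M' * P = B) ∧ Matrix.det M' = 6 ∧
    Nonempty (((Fin 5 → ℤ) ⧸ LinearMap.range (Matrix.toLin' M')) ≃+ ZMod 6) := by
  refine ⟨⟨!![1, 1, 0, -1, 0; 0, 1, 0, 0, 0; 1, 1, -1, -1, 0; 0, 0, 0, 1, 0; 0, 0, 0, 0, 1],
      ?_, ?_⟩, ?_, ?_⟩
  · right
    norm_num [Matrix.det_succ_row_zero, Fin.sum_univ_succ]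
    decide
  · show _ * M' * _ = B
    rw [M', B, ← Matrix.ext_iff]
    intro i j
    fin_cases i <;> fin_cases j <;> decide
  · rw [M']
    norm_num [Matrix.det_succ_row_zero, Fin.sum_univ_succ]
    decide
  · exact ⟨((Submodule.quotEquivOfEq _ _ range_eq_ker).trans
      (phi6.quotKerEquivOfSurjective phi6_surj)).toAddEquiv⟩
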